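/- Every finite p-abelian group has property Ŝ, where a finite p-group G is p-abelian if (xy)^p = x^p y^p for all x, y ∈ G. -/

import Mathlib

open Pointwise


section GroupLemmas

variable {H : Type*} [Group H]

/-- In a `p`-abelian `p`-group, `p`-th powers are central. -/
lemma pab_pow_comm {p : ℕ} (hp : p.Prime) (hpG : IsPGroup p H)
    (hpab : ∀ x y : H, (x * y) ^ p = x ^ p * y ^ p) (x y : H) :
    Commute (y ^ p) x := by
  obtain ⟨q, hq⟩ : ∃ q, q + 1 = p := ⟨p - 1, Nat.succ_pred_eq_of_pos hp.pos⟩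
  have h1 : ∀ a b : H, Commute (b ^ p) (a ^ q) := by
    intro a b
    have e3 : b * a = a⁻¹ * (a * b) * a := by group
    have e4 : (b * a) ^ p = a⁻¹ * (a * b) ^ p * a := by
      rw [e3]
      simpa [inv_inv] using conj_pow (i := p) (a := a⁻¹) (b := a * b)
    rw [hpab b a, hpab a b] at e4
    -- e4 : b ^ p * a ^ p = a⁻¹ * (a ^ p * b ^ p) * a
    have hap : a ^ p = a * a ^ q := by rw [← hq, pow_succ']
    have e5 : b ^ p * a ^ q * a = a ^ q * b ^ p * a := by
      have : b ^ p * (a * a ^ q) = a⁻¹ * (a * a ^ q * b ^ p) * a := by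
        rw [← hap, e4]
      calc b ^ p * a ^ q * a = b ^ p * (a * a ^ q) := by
            rw [mul_assoc, ← pow_succ, ← pow_succ', hq]
        _ = a⁻¹ * (a * a ^ q * b ^ p) * a := this
        _ = a ^ q * b ^ p * a := by group
    exact mul_right_cancel e5
  obtain ⟨k, hk⟩ := hpG x
  have hm : x ^ (p ^ (k + 1)) = 1 := by
    rw [pow_succ, pow_mul, hk, one_pow]
  have hco : Nat.Coprime q (p ^ (k + 1)) := by
    apply Nat.Coprime.pow_right
    have : ¬ p ∣ q := by
      intro hd
      rcases Nat.eq_zero_or_pos q with h0 | h0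
      · have : p = 1 := by omega
        exact hp.ne_one this
      · exact absurd (Nat.le_of_dvd h0 hd) (by omega)
    exact ((hp.coprime_iff_not_dvd).mpr this).symm
  obtain ⟨s, t, hst⟩ := hco.isCoprime
  have hx : ((x ^ q) ^ s) * ((x ^ (p ^ (k + 1))) ^ t) = x := by
    have h1 : ∀ (n : ℕ) (s : ℤ), (x ^ n) ^ s = x ^ ((n : ℤ) * s) := by
      intro n s; rw [← zpow_natCast x n, ← zpow_mul]
    rw [h1, h1, ← zpow_add]
    rw [show (q : ℤ) * s + ((p ^ (k + 1) : ℕ) : ℤ) * t = 1 by linear_combination hst]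
    exact zpow_one x
  rw [← hx]
  exact ((h1 x y).zpow_right s).mul_right (by rw [hm, one_zpow]; exact Commute.one_right _)

end GroupLemmas


section SpecHelpers

variable {F : Type*} [Field F]
variable {V : Type*} [AddCommGroup V] [Module F V]

lemma mem_spectrum_of_vec {f : Module.End F V} {μ : F} {v : V}
    (hv : v ≠ 0) (hfv : f v = μ • v) : μ ∈ spectrum F f :=
  (Module.End.hasEigenvalue_of_hasEigenvector
    ⟨Module.End.mem_eigenspace_iff.mpr hfv, hv⟩).mem_spectrum

lemma exists_vec_of_mem_spectrum [FiniteDimensional F V] {f : Module.End F V} {μ : F}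
    (h : μ ∈ spectrum F f) : ∃ v : V, v ≠ 0 ∧ f v = μ • v := by
  obtain ⟨v, hv⟩ := (Module.End.HasEigenvalue.of_mem_spectrum h).exists_hasEigenvector
  exact ⟨v, hv.2, Module.End.mem_eigenspace_iff.mp hv.1⟩

lemma unit_inv_apply (g : (Module.End F V)ˣ) (v : V) :
    (↑g⁻¹ : Module.End F V) ((↑g : Module.End F V) v) = v := by
  rw [← Module.End.mul_apply, ← Units.val_mul, inv_mul_cancel, Units.val_one,
    Module.End.one_apply]

lemma unit_apply_inv (g : (Module.End F V)ˣ) (v : V) :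
    (↑g : Module.End F V) ((↑g⁻¹ : Module.End F V) v) = v := by
  rw [← Module.End.mul_apply, ← Units.val_mul, mul_inv_cancel, Units.val_one,
    Module.End.one_apply]

lemma unit_apply_ne (g : (Module.End F V)ˣ) {v : V} (hv : v ≠ 0) :
    (↑g : Module.End F V) v ≠ 0 := fun h =>
  hv (by rw [← unit_inv_apply g v, h, map_zero])

lemma eig_ne_zero (g : (Module.End F V)ˣ) {μ : F} {v : V} (hv : v ≠ 0)
    (h : (↑g : Module.End F V) v = μ • v) : μ ≠ 0 := by
  intro h0
  exact unit_apply_ne g hv (by rw [h, h0, zero_smul])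

lemma smul_vec_cancel {a b : F} {v : V} (hv : v ≠ 0) (h : a • v = b • v) : a = b := by
  by_contra hne
  have h2 : (a - b) • v = 0 := by rw [sub_smul, h, sub_self]
  rcases smul_eq_zero.mp h2 with h3 | h3
  · exact hne (sub_eq_zero.mp h3)
  · exact hv h3

lemma pow_eig {f : Module.End F V} {μ : F} {v : V} (h : f v = μ • v) (n : ℕ) :
    (f ^ n) v = μ ^ n • v := by
  induction n with
  | zero => simp
  | succ n ih =>
    rw [pow_succ', Module.End.mul_apply, ih, map_smul, h, smul_smul, ← pow_succ]

lemma mem_spec_restrict (f : Module.End F V) {W : Submodule F V}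
    (hf : ∀ w ∈ W, f w ∈ W) {μ : F} {v : V} (hvW : v ∈ W) (h0 : v ≠ 0)
    (heq : f v = μ • v) : μ ∈ spectrum F (f.restrict hf) := by
  refine mem_spectrum_of_vec (v := (⟨v, hvW⟩ : W)) ?_ ?_
  · intro h; exact h0 (by simpa [Subtype.ext_iff] using h)
  · apply Subtype.ext
    simpa [LinearMap.restrict_apply] using heq

lemma spec_restrict_le [FiniteDimensional F V] (f : Module.End F V) {W : Submodule F V}
    (hf : ∀ w ∈ W, f w ∈ W) : spectrum F (f.restrict hf) ⊆ spectrum F f := by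
  intro μ hμ
  obtain ⟨w, hw0, hww⟩ := exists_vec_of_mem_spectrum hμ
  refine mem_spectrum_of_vec (v := (w : V)) (by simpa using hw0) ?_
  have := congrArg Subtype.val hww
  simpa [LinearMap.restrict_apply] using this

end SpecHelpers


section Reps

variable {F : Type*} [Field F]
variable {V : Type*} [AddCommGroup V] [Module F V]
variable {Γ : Type*} [Group Γ]

/-- Restriction of a linear group action to an invariant subspace, as a group hom. -/
def resHom (ι : Γ →* (Module.End F V)ˣ) (W : Submodule F V)
    (hinv : ∀ g : Γ, ∀ w ∈ W, (↑(ι g) : Module.End F V) w ∈ W) :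
    Γ →* (Module.End F W)ˣ where
  toFun g :=
    { val := (↑(ι g) : Module.End F V).restrict (hinv g)
      inv := (↑(ι g⁻¹) : Module.End F V).restrict (hinv g⁻¹)
      val_inv := by
        ext w
        simp only [Module.End.mul_apply, Module.End.one_apply, LinearMap.restrict_apply]
        rw [map_inv]
        exact unit_apply_inv (ι g) w
      inv_val := by
        ext w
        simp only [Module.End.mul_apply, Module.End.one_apply, LinearMap.restrict_apply]
        rw [map_inv]
        exact unit_inv_apply (ι g) w }
  map_one' := by
    apply Units.ext
    ext w
    simp only [Units.val_one, Module.End.one_apply, LinearMap.restrict_apply]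
    rw [map_one, Units.val_one, Module.End.one_apply]
  map_mul' g h := by
    apply Units.ext
    ext w
    simp only [Units.val_mul, Module.End.mul_apply, LinearMap.restrict_apply]
    rw [map_mul, Units.val_mul, Module.End.mul_apply]

@[simp] lemma resHom_val (ι : Γ →* (Module.End F V)ˣ) (W : Submodule F V)
    (hinv : ∀ g : Γ, ∀ w ∈ W, (↑(ι g) : Module.End F V) w ∈ W) (g : Γ) :
    (↑(resHom ι W hinv g) : Module.End F W) = (↑(ι g) : Module.End F V).restrict (hinv g) :=
  rfl

/-- Action on the quotient by an invariant subspace, as a group hom. -/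
def quotHom (ι : Γ →* (Module.End F V)ˣ) (W : Submodule F V)
    (hinv : ∀ g : Γ, ∀ w ∈ W, (↑(ι g) : Module.End F V) w ∈ W) :
    Γ →* (Module.End F (V ⧸ W))ˣ where
  toFun g :=
    { val := W.mapQ W (↑(ι g) : Module.End F V) (fun w hw => Submodule.mem_comap.mpr (hinv g w hw))
      inv := W.mapQ W (↑(ι g⁻¹) : Module.End F V)
        (fun w hw => Submodule.mem_comap.mpr (hinv g⁻¹ w hw))
      val_inv := by
        ext v
        simp only [LinearMap.coe_comp, Function.comp_apply, Submodule.mkQ_apply,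
          Module.End.mul_apply, Module.End.one_apply, Submodule.mapQ_apply]
        rw [map_inv, unit_apply_inv (ι g) v]
      inv_val := by
        ext v
        simp only [LinearMap.coe_comp, Function.comp_apply, Submodule.mkQ_apply,
          Module.End.mul_apply, Module.End.one_apply, Submodule.mapQ_apply]
        rw [map_inv, unit_inv_apply (ι g) v] }
  map_one' := by
    apply Units.ext
    ext v
    simp only [Units.val_one, LinearMap.coe_comp, Function.comp_apply, Submodule.mkQ_apply,
      Module.End.one_apply, Submodule.mapQ_apply]
    rw [map_one, Units.val_one, Module.End.one_apply]
  map_mul' g h := by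
    apply Units.ext
    ext v
    simp only [Units.val_mul, LinearMap.coe_comp, Function.comp_apply, Submodule.mkQ_apply,
      Module.End.mul_apply, Submodule.mapQ_apply]
    rw [map_mul, Units.val_mul, Module.End.mul_apply]

@[simp] lemma quotHom_val (ι : Γ →* (Module.End F V)ˣ) (W : Submodule F V)
    (hinv : ∀ g : Γ, ∀ w ∈ W, (↑(ι g) : Module.End F V) w ∈ W) (g : Γ) :
    (↑(quotHom ι W hinv g) : Module.End F (V ⧸ W)) =
      W.mapQ W (↑(ι g) : Module.End F V)
        (fun w hw => Submodule.mem_comap.mpr (hinv g w hw)) :=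
  rfl

lemma spec_quot_le [FiniteDimensional F V] (g : (Module.End F V)ˣ) {W : Submodule F V}
    (hle : W ≤ W.comap (↑g : Module.End F V)) :
    spectrum F (W.mapQ W (↑g : Module.End F V) hle) ⊆ spectrum F (↑g : Module.End F V) := by
  intro μ hμ
  by_contra hns
  rw [spectrum.mem_iff, not_not] at hns
  have hbij := (Module.End.isUnit_iff _).mp hns
  apply spectrum.notMem_iff.mpr ?_ hμ
  rw [Module.End.isUnit_iff]
  have hsurj : Function.Surjective
      ((algebraMap F (Module.End F (V ⧸ W))) μ - W.mapQ W (↑g : Module.End F V) hle) := by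
    intro x
    obtain ⟨v, rfl⟩ := Submodule.Quotient.mk_surjective W x
    obtain ⟨w, hw⟩ := hbij.2 v
    refine ⟨Submodule.Quotient.mk w, ?_⟩
    rw [LinearMap.sub_apply, Module.algebraMap_end_apply, Submodule.mapQ_apply,
      ← Submodule.Quotient.mk_smul, ← Submodule.Quotient.mk_sub]
    rw [← hw]
    congr 1
  exact ⟨(LinearMap.injective_iff_surjective).mpr hsurj, hsurj⟩

end Reps

section RangeTransfer

variable {Γ Δ : Type*} [Group Γ] [Group Δ]

lemma range_finite [Finite Γ] (f : Γ →* Δ) : Finite f.range :=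
  Set.Finite.to_subtype (Set.finite_range f)

lemma range_pgroup {p : ℕ} (hpG : IsPGroup p Γ) (f : Γ →* Δ) : IsPGroup p f.range := by
  rintro ⟨x, g, rfl⟩
  obtain ⟨k, hk⟩ := hpG g
  refine ⟨k, ?_⟩
  apply Subtype.ext
  show (f g) ^ p ^ k = 1
  rw [← map_pow, hk, map_one]

lemma range_pab {p : ℕ} (hpab : ∀ x y : Γ, (x * y) ^ p = x ^ p * y ^ p) (f : Γ →* Δ) :
    ∀ x y : f.range, (x * y) ^ p = x ^ p * y ^ p := by
  rintro ⟨x, g, rfl⟩ ⟨y, h, rfl⟩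
  apply Subtype.ext
  show (f g * f h) ^ p = (f g) ^ p * (f h) ^ p
  rw [← map_mul, ← map_pow, hpab, map_mul, map_pow, map_pow]

end RangeTransfer

section Fiber

variable {F : Type*} [Field F] [IsAlgClosed F]
variable {V : Type*} [AddCommGroup V] [Module F V]

/-- If a unit `G` is conjugate to `c • G` with `c ≠ 1` a root of unity of `p`-power order,
and `G ^ p` is the scalar `α`, then the spectrum of `G` is the full fiber of `α`. -/
lemma spec_eq_fiber [FiniteDimensional F V] [Nontrivial V] {p : ℕ} (hp : p.Prime)
    (G X : (Module.End F V)ˣ) (c α : F) (k : ℕ)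
    (hconj : (↑X : Module.End F V) * (↑G : Module.End F V) * (↑X⁻¹ : Module.End F V) =
      c • (↑G : Module.End F V))
    (hc1 : c ≠ 1) (hck : c ^ p ^ k = 1)
    (hGp : ((↑G : Module.End F V)) ^ p = α • 1) :
    spectrum F (↑G : Module.End F V) = {μ : F | μ ^ p = α} := by
  haveI : Fact p.Prime := ⟨hp⟩
  have hc0 : c ≠ 0 := by
    intro h
    rw [h, zero_pow (Nat.pos_of_ne_zero (pow_ne_zero k hp.ne_zero) |>.ne')] at hck
    exact zero_ne_one hck
  -- closure of the spectrum under multiplication by c⁻¹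
  have hclos : ∀ μ ∈ spectrum F (↑G : Module.End F V),
      c⁻¹ * μ ∈ spectrum F (↑G : Module.End F V) := by
    intro μ hμ
    obtain ⟨v, hv0, hv⟩ := exists_vec_of_mem_spectrum hμ
    refine mem_spectrum_of_vec (v := (↑X : Module.End F V) v) (unit_apply_ne X hv0) ?_
    have h1 : (↑X : Module.End F V) ((↑G : Module.End F V) ((↑X⁻¹ : Module.End F V)
        ((↑X : Module.End F V) v))) = c • (↑G : Module.End F V) ((↑X : Module.End F V) v) := by
      have := congrArg (fun (f : Module.End F V) => f ((↑X : Module.End F V) v)) hconj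
      simpa [Module.End.mul_apply] using this
    rw [unit_inv_apply X v, hv, map_smul] at h1
    -- h1 : μ • X v = c • G (X v)
    have h2 := congrArg (fun w => c⁻¹ • w) h1
    simp only [smul_smul, inv_mul_cancel₀ hc0, one_smul] at h2
    exact h2.symm
  have hiter : ∀ (m : ℕ), ∀ μ ∈ spectrum F (↑G : Module.End F V),
      (c⁻¹) ^ m * μ ∈ spectrum F (↑G : Module.End F V) := by
    intro m
    induction m with
    | zero => intro μ hμ; simpa using hμ
    | succ m ih =>
      intro μ hμ
      have := hclos _ (ih μ hμ)
      rw [← mul_assoc, ← pow_succ'] at this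
      exact this
  -- the order of d := c⁻¹
  set d := c⁻¹ with hd
  have hd1 : d ≠ 1 := fun h => hc1 (by rwa [hd, inv_eq_one] at h)
  have hdk : d ^ p ^ k = 1 := by rw [hd, inv_pow, hck, inv_one]
  obtain ⟨j, hjle, hj⟩ := (Nat.dvd_prime_pow hp).mp (orderOf_dvd_of_pow_eq_one hdk)
  have hj0 : j ≠ 0 := by
    rintro rfl
    rw [pow_zero] at hj
    exact hd1 (orderOf_eq_one_iff.mp hj)
  set ω := d ^ (p ^ (j - 1)) with hω
  have hωp : ω ^ p = 1 := by
    rw [hω, ← pow_mul, ← pow_succ, show j - 1 + 1 = j from by omega, ← hj,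
      pow_orderOf_eq_one]
  have hω1 : ω ≠ 1 := by
    intro h
    have hdvd : orderOf d ∣ p ^ (j - 1) := orderOf_dvd_of_pow_eq_one h
    rw [hj] at hdvd
    have hle2 := Nat.le_of_dvd (Nat.pow_pos hp.pos) hdvd
    have := Nat.pow_lt_pow_right hp.one_lt (Nat.sub_lt (Nat.pos_of_ne_zero hj0) one_pos)
    omega
  have hprim : IsPrimitiveRoot ω p := by
    have : orderOf ω = p := orderOf_eq_prime hωp hω1
    exact this ▸ IsPrimitiveRoot.orderOf ω
  -- every spectral value is a p-th root of α
  have hfib : ∀ μ ∈ spectrum F (↑G : Module.End F V), μ ^ p = α := by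
    intro μ hμ
    obtain ⟨v, hv0, hv⟩ := exists_vec_of_mem_spectrum hμ
    have h2 := pow_eig hv p
    rw [hGp] at h2
    have h3 : α • v = μ ^ p • v := by
      simpa [LinearMap.smul_apply, Module.End.one_apply] using h2
    exact (smul_vec_cancel hv0 h3).symm
  obtain ⟨μ0, hμ0⟩ : ∃ μ0, μ0 ∈ spectrum F (↑G : Module.End F V) := by
    obtain ⟨μ0, h⟩ := Module.End.exists_eigenvalue (↑G : Module.End F V)
    exact ⟨μ0, h.mem_spectrum⟩
  have hμ00 : μ0 ≠ 0 := by
    obtain ⟨v, hv0, hv⟩ := exists_vec_of_mem_spectrum hμ0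
    exact eig_ne_zero G hv0 hv
  have hα : α ≠ 0 := by
    rw [← hfib μ0 hμ0]
    exact pow_ne_zero _ hμ00
  ext μ
  constructor
  · exact fun h => hfib μ h
  · intro hμp
    have hζ : (μ / μ0) ^ p = 1 := by
      rw [div_pow, hμp, hfib μ0 hμ0, div_self hα]
    haveI : NeZero p := ⟨hp.ne_zero⟩
    obtain ⟨i, _, hi⟩ := hprim.eq_pow_of_pow_eq_one hζ
    have hμeq : μ = d ^ (p ^ (j - 1) * i) * μ0 := by
      rw [pow_mul, ← hω, hi, div_mul_cancel₀ _ hμ00]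
    rw [hμeq, hd]
    exact hiter _ μ0 hμ0

end Fiber

section MoreHelpers

variable {F : Type*} [Field F]
variable {V : Type*} [AddCommGroup V] [Module F V]

lemma scalar_smul_one_eq_one [Nontrivial V] {c : F}
    (h : (c • 1 : Module.End F V) = 1) : c = 1 := by
  obtain ⟨v, hv⟩ := exists_ne (0 : V)
  have h2 := LinearMap.congr_fun h v
  simp only [LinearMap.smul_apply, Module.End.one_apply] at h2
  have h3 : c • v = (1 : F) • v := by simpa using h2
  exact smul_vec_cancel hv h3

lemma spec_pow_scalar [FiniteDimensional F V] {f : Module.End F V} {p : ℕ} {α μ : F}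
    (hf : f ^ p = α • 1) (hμ : μ ∈ spectrum F f) : μ ^ p = α := by
  obtain ⟨v, hv0, hv⟩ := exists_vec_of_mem_spectrum hμ
  have h2 := pow_eig hv p
  rw [hf] at h2
  have h3 : α • v = μ ^ p • v := by
    simpa [LinearMap.smul_apply, Module.End.one_apply] using h2
  exact (smul_vec_cancel hv0 h3).symm

end MoreHelpers

section KeyLemma

universe v

variable {F : Type*} [Field F] [IsAlgClosed F]

set_option maxHeartbeats 1600000 in
lemma key_lemma (p : ℕ) (hp : p.Prime) :
    ∀ (n : ℕ) (V : Type v) [AddCommGroup V] [Module F V] [FiniteDimensional F V],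
      Module.finrank F V = n →
      ∀ (H : Subgroup (Module.End F V)ˣ), Finite H → IsPGroup p H →
        (∀ x y : H, (x * y) ^ p = x ^ p * y ^ p) →
        ∀ A B : H,
          spectrum F (((A * B : H) : (Module.End F V)ˣ) : Module.End F V) ⊆
            spectrum F ((A : (Module.End F V)ˣ) : Module.End F V) *
              spectrum F ((B : (Module.End F V)ˣ) : Module.End F V) := by
  intro n
  induction n using Nat.strong_induction_on with
  | _ n IH =>
  intro V _ _ _ hrank H hfin hpH hpab A B μ hμ
  haveI := hfin
  haveI : Fact p.Prime := ⟨hp⟩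
  set evm : H →* Module.End F V := (Units.coeHom (Module.End F V)).comp H.subtype with hevm
  have hevm_inj : Function.Injective evm := fun x y h => Subtype.ext (Units.ext h)
  set Av := evm A with hAvdef
  set Bv := evm B with hBvdef
  have hABμ : μ ∈ spectrum F (Av * Bv) := by
    have h : μ ∈ spectrum F (evm (A * B)) := hμ
    rwa [map_mul] at h
  show μ ∈ spectrum F Av * spectrum F Bv
  have hAunit : IsUnit Av := (A : (Module.End F V)ˣ).isUnit
  by_cases hcomm : Av * Bv = Bv * Av
  · -- A and B commute: direct eigenvector argument
    obtain ⟨v, hv0, hv⟩ := exists_vec_of_mem_spectrum hABμ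
    set K := Module.End.eigenspace (Av * Bv) μ with hK
    have hvK : v ∈ K := Module.End.mem_eigenspace_iff.mpr hv
    have hKinv : ∀ w ∈ K, Av w ∈ K := by
      intro w hw
      rw [Module.End.mem_eigenspace_iff] at hw ⊢
      have hcomm2 : (Av * Bv) * Av = Av * (Av * Bv) := by
        rw [mul_assoc, hcomm, ← mul_assoc]
      calc (Av * Bv) (Av w) = ((Av * Bv) * Av) w := rfl
        _ = (Av * (Av * Bv)) w := by rw [hcomm2]
        _ = Av ((Av * Bv) w) := rfl
        _ = μ • Av w := by rw [hw, map_smul]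
    haveI : Nontrivial K :=
      ⟨⟨⟨v, hvK⟩, 0, fun h => hv0 (by simpa [Subtype.ext_iff] using h)⟩⟩
    obtain ⟨α, hα⟩ := Module.End.exists_eigenvalue (Av.restrict hKinv)
    obtain ⟨w, hw⟩ := hα.exists_hasEigenvector
    have hww : Av ↑w = α • (↑w : V) := by
      have := congrArg Subtype.val (Module.End.mem_eigenspace_iff.mp hw.1)
      simpa [LinearMap.restrict_apply] using this
    have hw0 : (↑w : V) ≠ 0 := fun h => hw.2 (Subtype.ext h)
    have hα0 : α ≠ 0 := eig_ne_zero (A : (Module.End F V)ˣ) hw0 hww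
    have hwK : (Av * Bv) ↑w = μ • (↑w : V) := Module.End.mem_eigenspace_iff.mp w.2
    have hAinj : Function.Injective Av := ((Module.End.isUnit_iff Av).mp hAunit).injective
    have hBw : Bv ↑w = (α⁻¹ * μ) • (↑w : V) := by
      apply hAinj
      have h1 : Av (Bv ↑w) = μ • (↑w : V) := by
        rw [← Module.End.mul_apply]; exact hwK
      have h2 : Av ((α⁻¹ * μ) • (↑w : V)) = μ • (↑w : V) := by
        rw [map_smul, hww, smul_smul]
        congr 1
        field_simp
      rw [h1, h2]
    have hμeq : μ = α * (α⁻¹ * μ) := by field_simp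
    rw [hμeq]
    exact Set.mul_mem_mul (mem_spectrum_of_vec hw0 hww) (mem_spectrum_of_vec hw0 hBw)
  · -- A and B do not commute
    have hVnt : Nontrivial V := by
      by_contra hns
      rw [not_nontrivial_iff_subsingleton] at hns
      exact hcomm (Subsingleton.elim _ _)
    by_cases hred : ∃ W : Submodule F V,
        (∀ g : H, ∀ w ∈ W, evm g w ∈ W) ∧ W ≠ ⊥ ∧ W ≠ ⊤
    · -- reducible case
      obtain ⟨W, hWinv, hW0, hWT⟩ := hred
      have hinv : ∀ g : H, ∀ w ∈ W, (↑(H.subtype g) : Module.End F V) w ∈ W := hWinv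
      set rh := resHom H.subtype W hinv with hrh
      set qh := quotHom H.subtype W hinv with hqh
      by_cases hμW : μ ∈ spectrum F (↑(rh (A * B)) : Module.End F W)
      · -- comes from the invariant subspace
        have hlt : Module.finrank F W < n :=
          hrank ▸ Submodule.finrank_lt hWT
        have hres := IH _ hlt W rfl rh.range (range_finite rh) (range_pgroup hpH rh)
          (range_pab hpab rh) ⟨rh A, A, rfl⟩ ⟨rh B, B, rfl⟩
        have hμ2 : μ ∈ spectrum F
            (((⟨rh A, A, rfl⟩ * ⟨rh B, B, rfl⟩ : rh.range) : (Module.End F W)ˣ) :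
              Module.End F W) := by
          have hcoe : ((⟨rh A, A, rfl⟩ * ⟨rh B, B, rfl⟩ : rh.range) : (Module.End F W)ˣ)
              = rh (A * B) := by
            rw [map_mul]; rfl
          rw [hcoe]
          exact hμW
        have h3 := hres hμ2
        refine Set.mul_subset_mul ?_ ?_ h3
        · intro x hx
          have hx' : x ∈ spectrum F
              ((↑(H.subtype A) : Module.End F V).restrict (hinv A)) := hx
          exact spec_restrict_le _ _ hx'
        · intro x hx
          have hx' : x ∈ spectrum F
              ((↑(H.subtype B) : Module.End F V).restrict (hinv B)) := hx
          exact spec_restrict_le _ _ hx'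
      · -- comes from the quotient
        have hq : μ ∈ spectrum F (↑(qh (A * B)) : Module.End F (V ⧸ W)) := by
          obtain ⟨v, hv0, hv⟩ := exists_vec_of_mem_spectrum hABμ
          have hvAB : evm (A * B) v = μ • v := by rw [map_mul]; exact hv
          refine mem_spectrum_of_vec (v := Submodule.Quotient.mk v) ?_ ?_
          · intro h
            apply hμW
            have hvW : v ∈ W := (Submodule.Quotient.mk_eq_zero W).mp h
            exact mem_spec_restrict (evm (A * B)) (hinv (A * B)) hvW hv0 hvAB
          · show (↑(qh (A * B)) : Module.End F (V ⧸ W)) (Submodule.Quotient.mk v)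
              = μ • Submodule.Quotient.mk v
            rw [hqh, quotHom_val, Submodule.mapQ_apply]
            rw [show (↑(H.subtype (A * B)) : Module.End F V) v = μ • v from hvAB,
              Submodule.Quotient.mk_smul]
        have hWpos : 0 < Module.finrank F W := by
          haveI : Nontrivial W := Submodule.nontrivial_iff_ne_bot.mpr hW0
          exact Module.finrank_pos
        have hq_add := Submodule.finrank_quotient_add_finrank W
        have hlt : Module.finrank F (V ⧸ W) < n := by rw [← hrank]; omega
        have hres := IH _ hlt (V ⧸ W) rfl qh.range (range_finite qh) (range_pgroup hpH qh)
          (range_pab hpab qh) ⟨qh A, A, rfl⟩ ⟨qh B, B, rfl⟩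
        have hμ2 : μ ∈ spectrum F
            (((⟨qh A, A, rfl⟩ * ⟨qh B, B, rfl⟩ : qh.range) : (Module.End F (V ⧸ W))ˣ) :
              Module.End F (V ⧸ W)) := by
          have hcoe : ((⟨qh A, A, rfl⟩ * ⟨qh B, B, rfl⟩ : qh.range) : (Module.End F (V ⧸ W))ˣ)
              = qh (A * B) := by
            rw [map_mul]; rfl
          rw [hcoe]
          exact hq
        have h3 := hres hμ2
        refine Set.mul_subset_mul ?_ ?_ h3
        · intro x hx
          have hx' : x ∈ spectrum F (W.mapQ W (↑(H.subtype A) : Module.End F V)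
              (fun w hw => Submodule.mem_comap.mpr (hinv A w hw))) := hx
          exact spec_quot_le _ _ hx'
        · intro x hx
          have hx' : x ∈ spectrum F (W.mapQ W (↑(H.subtype B) : Module.End F V)
              (fun w hw => Submodule.mem_comap.mpr (hinv B w hw))) := hx
          exact spec_quot_le _ _ hx'
    · -- irreducible case
      push_neg at hred
      have hirr : ∀ W : Submodule F V, (∀ g : H, ∀ w ∈ W, evm g w ∈ W) → W ≠ ⊥ → W = ⊤ :=
        fun W h1 h2 => hred W h1 h2
      have schur : ∀ T : Module.End F V,
          (∀ g : H, T * evm g = evm g * T) → ∃ c : F, T = c • 1 := by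
        intro T hT
        obtain ⟨c, hc⟩ := Module.End.exists_eigenvalue T
        refine ⟨c, ?_⟩
        have hW : Module.End.eigenspace T c = ⊤ := by
          apply hirr
          · intro g w hw
            rw [Module.End.mem_eigenspace_iff] at hw ⊢
            calc T (evm g w) = (T * evm g) w := rfl
              _ = (evm g * T) w := by rw [hT g]
              _ = evm g (T w) := rfl
              _ = c • evm g w := by rw [hw, map_smul]
          · exact Module.End.hasEigenvalue_iff.mp hc
        ext v
        have hv : v ∈ Module.End.eigenspace T c := hW ▸ Submodule.mem_top
        rw [Module.End.mem_eigenspace_iff] at hv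
        simpa [LinearMap.smul_apply, Module.End.one_apply] using hv
      -- find an element u whose image in H/Z(H) is central and nontrivial
      set Z := Subgroup.center H with hZ
      have hABne : (A : H) * B ≠ B * A := by
        intro h
        exact hcomm (by rw [← map_mul, h, map_mul])
      have hAnotZ : (A : H) ∉ Z := fun h => hABne (Subgroup.mem_center_iff.mp h B).symm
      haveI : Nontrivial (H ⧸ Z) :=
        ⟨⟨QuotientGroup.mk A, 1, fun h => hAnotZ ((QuotientGroup.eq_one_iff _).mp h)⟩⟩
      have hQp : IsPGroup p (H ⧸ Z) := hpH.to_quotient Z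
      haveI := hQp.center_nontrivial
      obtain ⟨zb, hzb⟩ := exists_ne (1 : Subgroup.center (H ⧸ Z))
      obtain ⟨u, hu⟩ := QuotientGroup.mk_surjective (zb : H ⧸ Z)
      have huZ : (u : H) ∉ Z := by
        intro h
        apply hzb
        apply Subtype.ext
        show (zb : H ⧸ Z) = 1
        rw [← hu]
        exact (QuotientGroup.eq_one_iff u).mpr h
      have hucentral : ∀ g : H, g⁻¹ * u * g * u⁻¹ ∈ Z := by
        intro g
        rw [← QuotientGroup.eq_one_iff]
        have hc := Subgroup.mem_center_iff.mp zb.2 (QuotientGroup.mk g⁻¹)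
        rw [← hu] at hc
        have hrw : (QuotientGroup.mk (g⁻¹ * u * g * u⁻¹) : H ⧸ Z)
            = (QuotientGroup.mk g⁻¹ * QuotientGroup.mk u)
              * (QuotientGroup.mk u * QuotientGroup.mk g⁻¹)⁻¹ := by
          simp only [← QuotientGroup.mk_mul, ← QuotientGroup.mk_inv]
          congr 1
          done
        rw [hrw, hc, mul_inv_cancel]
      -- the scalars associated with conjugation by u
      have hscal : ∀ g : H, ∃ c : F, evm (g⁻¹ * u * g * u⁻¹) = c • 1 := by
        intro g
        apply schur
        intro x
        have hz := Subgroup.mem_center_iff.mp (hucentral g) x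
        calc evm (g⁻¹ * u * g * u⁻¹) * evm x = evm ((g⁻¹ * u * g * u⁻¹) * x) :=
            (map_mul _ _ _).symm
          _ = evm (x * (g⁻¹ * u * g * u⁻¹)) := by rw [← hz]
          _ = evm x * evm (g⁻¹ * u * g * u⁻¹) := map_mul _ _ _
      obtain ⟨cA, hcA⟩ := hscal A
      obtain ⟨cB, hcB⟩ := hscal B
      have hconj : ∀ (g : H) (c : F), evm (g⁻¹ * u * g * u⁻¹) = c • 1 →
          evm u * evm g * evm u⁻¹ = c • evm g := by
        intro g c hgc
        have h1 : (u : H) * g * u⁻¹ = g * (g⁻¹ * u * g * u⁻¹) := by group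
        calc evm u * evm g * evm u⁻¹ = evm (u * g * u⁻¹) := by rw [map_mul, map_mul]
          _ = evm (g * (g⁻¹ * u * g * u⁻¹)) := by rw [h1]
          _ = evm g * (c • 1) := by rw [map_mul, hgc]
          _ = c • evm g := by rw [mul_smul_comm, mul_one]
      -- p-th powers are central, hence scalars
      have hcentralpow : ∀ x : H, x ^ p ∈ Z := by
        intro x
        rw [hZ, Subgroup.mem_center_iff]
        intro g
        exact ((pab_pow_comm hp hpH hpab g x).eq).symm
      have hscalpow : ∀ x : H, ∃ α : F, evm (x ^ p) = α • 1 := by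
        intro x
        apply schur
        intro g
        have hz := Subgroup.mem_center_iff.mp (hcentralpow x) g
        calc evm (x ^ p) * evm g = evm (x ^ p * g) := (map_mul _ _ _).symm
          _ = evm (g * x ^ p) := by rw [← hz]
          _ = evm g * evm (x ^ p) := map_mul _ _ _
      obtain ⟨αA, hαA⟩ := hscalpow A
      obtain ⟨αB, hαB⟩ := hscalpow B
      have hαAe : Av ^ p = αA • 1 := by
        have hmp : evm (A ^ p) = (evm A) ^ p := map_pow evm A p
        rw [hAvdef, ← hmp, hαA]
      have hαBe : Bv ^ p = αB • 1 := by
        have hmp : evm (B ^ p) = (evm B) ^ p := map_pow evm B p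
        rw [hBvdef, ← hmp, hαB]
      have hABp : (Av * Bv) ^ p = (αA * αB) • 1 := by
        have h1 : Av * Bv = evm (A * B) := by rw [map_mul]
        have h2 : evm (A * B) ^ p = evm ((A * B) ^ p) := (map_pow evm (A * B) p).symm
        rw [h1, h2, hpab A B, map_mul, hαA, hαB, smul_mul_smul, mul_one]
      have hμp : μ ^ p = αA * αB := spec_pow_scalar hABp hABμ
      have hμ0 : μ ≠ 0 := by
        obtain ⟨v, hv0, hv⟩ := exists_vec_of_mem_spectrum hABμ
        have hv2 : evm (A * B) v = μ • v := by rw [map_mul]; exact hv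
        exact eig_ne_zero ((A * B : H) : (Module.End F V)ˣ) hv0 hv2
      have hαA0 : αA ≠ 0 := by
        intro h
        apply hμ0
        have h2 := hμp
        rw [h, zero_mul] at h2
        exact (pow_eq_zero_iff hp.ne_zero).mp h2
      have hαB0 : αB ≠ 0 := by
        intro h
        apply hμ0
        have h2 := hμp
        rw [h, mul_zero] at h2
        exact (pow_eq_zero_iff hp.ne_zero).mp h2
      -- the conjugation scalars are roots of unity of p-power order
      have hscal_pow_one : ∀ (g : H) (c : F), evm (g⁻¹ * u * g * u⁻¹) = c • 1 →
          ∃ k : ℕ, c ^ p ^ k = 1 := by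
        intro g c hgc
        obtain ⟨k, hk⟩ := hpH (g⁻¹ * u * g * u⁻¹)
        have h1 : evm ((g⁻¹ * u * g * u⁻¹) ^ p ^ k) = 1 := by rw [hk, map_one]
        rw [map_pow, hgc, smul_pow, one_pow] at h1
        exact ⟨k, scalar_smul_one_eq_one h1⟩
      have hXinv : evm u⁻¹ = (↑((H.subtype u)⁻¹) : Module.End F V) :=
        congrArg Units.val (map_inv H.subtype u)
      by_cases hcA1 : cA = 1
      · by_cases hcB1 : cB = 1
        · -- both A and B commute with u : pass to an eigenspace of u
          have hcomm_of_one : ∀ (g : H) (c : F), evm (g⁻¹ * u * g * u⁻¹) = c • 1 → c = 1 →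
              (u : H) * g = g * u := by
            intro g c hgc hc1
            have h2 : (g⁻¹ * u * g * u⁻¹ : H) = 1 := by
              apply hevm_inj
              rw [hgc, hc1, one_smul, map_one]
            have h3 : (g : H)⁻¹ * u * g = u := by
              have h4 := congrArg (fun x => x * u) h2
              simpa [mul_assoc] using h4
            calc (u : H) * g = g * (g⁻¹ * u * g) := by group
              _ = g * u := by rw [h3]
          have hcomA : (u : H) * A = A * u := hcomm_of_one A cA hcA hcA1
          have hcomB : (u : H) * B = B * u := hcomm_of_one B cB hcB hcB1
          have hUA : evm u * Av = Av * evm u := by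
            rw [hAvdef, ← map_mul, ← map_mul, hcomA]
          have hUB : evm u * Bv = Bv * evm u := by
            rw [hBvdef, ← map_mul, ← map_mul, hcomB]
          have hUAB : evm u * (Av * Bv) = (Av * Bv) * evm u := by
            rw [← mul_assoc, hUA, mul_assoc, hUB, ← mul_assoc]
          have hUnotscalar : ∀ c : F, evm u ≠ c • 1 := by
            intro c hc
            apply huZ
            rw [hZ, Subgroup.mem_center_iff]
            intro g
            apply hevm_inj
            rw [map_mul, map_mul, hc, mul_smul_comm, smul_mul_assoc, mul_one, one_mul]
          obtain ⟨v, hv0, hv⟩ := exists_vec_of_mem_spectrum hABμ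
          set K := Module.End.eigenspace (Av * Bv) μ with hKdef
          have hvK : v ∈ K := Module.End.mem_eigenspace_iff.mpr hv
          have hKU : ∀ w ∈ K, evm u w ∈ K := by
            intro w hw
            rw [Module.End.mem_eigenspace_iff] at hw ⊢
            calc (Av * Bv) (evm u w) = ((Av * Bv) * evm u) w := rfl
              _ = (evm u * (Av * Bv)) w := by rw [hUAB]
              _ = evm u ((Av * Bv) w) := rfl
              _ = μ • evm u w := by rw [hw, map_smul]
          haveI : Nontrivial K :=
            ⟨⟨⟨v, hvK⟩, 0, fun h => hv0 (by simpa [Subtype.ext_iff] using h)⟩⟩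
          obtain ⟨ν, hν⟩ := Module.End.exists_eigenvalue ((evm u).restrict hKU)
          obtain ⟨w, hw⟩ := hν.exists_hasEigenvector
          have hw0 : (↑w : V) ≠ 0 := fun h => hw.2 (Subtype.ext h)
          have hwU : evm u ↑w = ν • (↑w : V) := by
            have := congrArg Subtype.val (Module.End.mem_eigenspace_iff.mp hw.1)
            simpa [LinearMap.restrict_apply] using this
          have hwAB : (Av * Bv) ↑w = μ • (↑w : V) := Module.End.mem_eigenspace_iff.mp w.2
          set E := Module.End.eigenspace (evm u) ν with hEdef
          have hwE : (↑w : V) ∈ E := Module.End.mem_eigenspace_iff.mpr hwU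
          have hET : E ≠ ⊤ := by
            intro h
            apply hUnotscalar ν
            ext x
            have hx : x ∈ E := h ▸ Submodule.mem_top
            rw [Module.End.mem_eigenspace_iff] at hx
            simpa [LinearMap.smul_apply, Module.End.one_apply] using hx
          set C := Subgroup.centralizer ({u} : Set H) with hC
          have hmemC : ∀ g : H, (u : H) * g = g * u → g ∈ C := by
            intro g hg
            rw [hC]
            exact Subgroup.mem_centralizer_iff.mpr (fun x hx => by
              rw [Set.mem_singleton_iff] at hx
              subst hx
              exact hg)
          have hAC : (A : H) ∈ C := hmemC A hcomA
          have hBC : (B : H) ∈ C := hmemC B hcomB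
          set ι : C →* (Module.End F V)ˣ := H.subtype.comp C.subtype with hι
          have hιev : ∀ g : C, (↑(ι g) : Module.End F V) = evm (g : H) := fun g => rfl
          have hinvE : ∀ g : C, ∀ x ∈ E, (↑(ι g) : Module.End F V) x ∈ E := by
            intro g x hx
            rw [hEdef, Module.End.mem_eigenspace_iff] at hx ⊢
            have hgu : (u : H) * g = (g : H) * u :=
              Subgroup.mem_centralizer_iff.mp g.2 u (Set.mem_singleton u)
            have hcm : evm u * evm (g : H) = evm (g : H) * evm u := by
              rw [← map_mul, ← map_mul, hgu]
            rw [hιev]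
            calc evm u (evm (g : H) x) = (evm u * evm (g : H)) x := rfl
              _ = (evm (g : H) * evm u) x := by rw [hcm]
              _ = evm (g : H) (evm u x) := rfl
              _ = ν • evm (g : H) x := by rw [hx, map_smul]
          set rh2 := resHom ι E hinvE with hrh2
          have hlt : Module.finrank F E < n :=
            hrank ▸ Submodule.finrank_lt hET
          have hCp : IsPGroup p C := hpH.to_subgroup C
          have hCpab : ∀ x y : C, (x * y) ^ p = x ^ p * y ^ p := by
            intro x y
            apply Subtype.ext
            push_cast
            exact hpab x y
          have hres := IH _ hlt E rfl rh2.range (range_finite rh2) (range_pgroup hCp rh2)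
            (range_pab hCpab rh2) ⟨rh2 ⟨A, hAC⟩, ⟨A, hAC⟩, rfl⟩ ⟨rh2 ⟨B, hBC⟩, ⟨B, hBC⟩, rfl⟩
          have hAB' : (↑(ι (⟨A, hAC⟩ * ⟨B, hBC⟩ : C)) : Module.End F V) = Av * Bv := by
            rw [map_mul]
            rfl
          have hμ2 : μ ∈ spectrum F
              (((⟨rh2 ⟨A, hAC⟩, ⟨A, hAC⟩, rfl⟩ * ⟨rh2 ⟨B, hBC⟩, ⟨B, hBC⟩, rfl⟩ : rh2.range) :
                (Module.End F E)ˣ) : Module.End F E) := by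
            have hcoe : ((⟨rh2 ⟨A, hAC⟩, ⟨A, hAC⟩, rfl⟩ * ⟨rh2 ⟨B, hBC⟩, ⟨B, hBC⟩, rfl⟩ :
                rh2.range) : (Module.End F E)ˣ) = rh2 (⟨A, hAC⟩ * ⟨B, hBC⟩) := by
              rw [map_mul]; rfl
            rw [hcoe, hrh2, resHom_val]
            exact mem_spec_restrict _ _ hwE hw0 (by rw [hAB']; exact hwAB)
          have h3 := hres hμ2
          refine Set.mul_subset_mul ?_ ?_ h3
          · intro x hx
            have hx' : x ∈ spectrum F
                ((↑(ι ⟨A, hAC⟩) : Module.End F V).restrict (hinvE ⟨A, hAC⟩)) := hx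
            exact spec_restrict_le _ _ hx'
          · intro x hx
            have hx' : x ∈ spectrum F
                ((↑(ι ⟨B, hBC⟩) : Module.End F V).restrict (hinvE ⟨B, hBC⟩)) := hx
            exact spec_restrict_le _ _ hx'
        · -- cB ≠ 1 : the spectrum of B is a full fiber
          obtain ⟨k, hck⟩ := hscal_pow_one B cB hcB
          have hfibB : spectrum F Bv = {x : F | x ^ p = αB} := by
            refine spec_eq_fiber hp (H.subtype B) (H.subtype u) cB αB k ?_ hcB1 hck hαBe
            have h := hconj B cB hcB
            rwa [hXinv] at h
          obtain ⟨μ0, hμ0A⟩ : ∃ x, x ∈ spectrum F Av := by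
            obtain ⟨c, hc⟩ := Module.End.exists_eigenvalue Av
            exact ⟨c, hc.mem_spectrum⟩
          have hμ0p : μ0 ^ p = αA := spec_pow_scalar hαAe hμ0A
          have hμ00 : μ0 ≠ 0 := by
            intro h
            exact hαA0 (by rw [← hμ0p, h, zero_pow hp.ne_zero])
          have hfinal : μ = μ0 * (μ0⁻¹ * μ) := by field_simp
          rw [hfinal]
          apply Set.mul_mem_mul hμ0A
          rw [hfibB]
          show (μ0⁻¹ * μ) ^ p = αB
          rw [mul_pow, inv_pow, hμ0p, hμp]
          field_simp
      · -- cA ≠ 1 : the spectrum of A is a full fiber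
        obtain ⟨k, hck⟩ := hscal_pow_one A cA hcA
        have hfibA : spectrum F Av = {x : F | x ^ p = αA} := by
          refine spec_eq_fiber hp (H.subtype A) (H.subtype u) cA αA k ?_ hcA1 hck hαAe
          have h := hconj A cA hcA
          rwa [hXinv] at h
        obtain ⟨β, hβB⟩ : ∃ x, x ∈ spectrum F Bv := by
          obtain ⟨c, hc⟩ := Module.End.exists_eigenvalue Bv
          exact ⟨c, hc.mem_spectrum⟩
        have hβp : β ^ p = αB := spec_pow_scalar hαBe hβB
        have hβ0 : β ≠ 0 := by
          intro h
          exact hαB0 (by rw [← hβp, h, zero_pow hp.ne_zero])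
        have hfinal : μ = (μ * β⁻¹) * β := by field_simp
        rw [hfinal]
        refine Set.mul_mem_mul ?_ hβB
        rw [hfibA]
        show (μ * β⁻¹) ^ p = αA
        rw [mul_pow, inv_pow, hβp, hμp]
        field_simp

end KeyLemma

/-- A finite group `G` has property Ŝ (over `F`) if for every subgroup `K ≤ G` and every
finite-dimensional representation `ρ : K → GL_n(F)`, the matrix group `ρ(K)` has
submultiplicative spectrum: `σ(ρ(a)ρ(b)) ⊆ σ(ρ(a))·σ(ρ(b))` for all `a, b ∈ K`. -/
def PropertyShat (F : Type*) [Field F] (G : Type*) [Group G] : Prop :=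
  ∀ (K : Subgroup G) (n : ℕ) (ρ : K →* GL (Fin n) F) (a b : K),
    spectrum F ((ρ (a * b) : GL (Fin n) F) : Matrix (Fin n) (Fin n) F) ⊆
      spectrum F ((ρ a : GL (Fin n) F) : Matrix (Fin n) (Fin n) F) *
        spectrum F ((ρ b : GL (Fin n) F) : Matrix (Fin n) (Fin n) F)


/-- Every finite `p`-abelian group has property Ŝ, where a finite
`p`-group `G` is `p`-abelian if `(x*y)^p = x^p * y^p` for all `x, y ∈ G`. -/
theorem stmt14 {F : Type*} [Field F] [IsAlgClosed F] [CharZero F]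
    {G : Type*} [Group G] [Finite G] (p : ℕ) (hp : p.Prime)
    (hpG : IsPGroup p G) (hpab : ∀ x y : G, (x * y) ^ p = x ^ p * y ^ p) :
    PropertyShat F G := by
  intro K n ρ a b
  have hpK : IsPGroup p K := hpG.to_subgroup K
  have hpabK : ∀ x y : K, (x * y) ^ p = x ^ p * y ^ p := by
    intro x y
    apply Subtype.ext
    push_cast
    exact hpab x y
  set e : Matrix (Fin n) (Fin n) F ≃ₐ[F] Module.End F (Fin n → F) :=
    Matrix.toLinAlgEquiv' with he
  set m : Matrix (Fin n) (Fin n) F →* Module.End F (Fin n → F) :=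
    ((e : Matrix (Fin n) (Fin n) F ≃+* Module.End F (Fin n → F)).toMulEquiv.toMonoidHom) with hm
  set φ : K →* (Module.End F (Fin n → F))ˣ := (Units.map m).comp ρ with hφ
  have hspec : ∀ g : K,
      spectrum F ((φ g : (Module.End F (Fin n → F))ˣ) : Module.End F (Fin n → F)) =
        spectrum F ((ρ g : GL (Fin n) F) : Matrix (Fin n) (Fin n) F) := by
    intro g
    have h1 : ((φ g : (Module.End F (Fin n → F))ˣ) : Module.End F (Fin n → F)) =
        e ((ρ g : GL (Fin n) F) : Matrix (Fin n) (Fin n) F) := rfl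
    rw [h1, AlgEquiv.spectrum_eq]
  have h := key_lemma (F := F) p hp (Module.finrank F (Fin n → F)) (Fin n → F) rfl
    φ.range (range_finite φ) (range_pgroup hpK φ) (range_pab hpabK φ)
    ⟨φ a, a, rfl⟩ ⟨φ b, b, rfl⟩
  intro μ hμ
  have hcoe : ((⟨φ a, a, rfl⟩ * ⟨φ b, b, rfl⟩ : φ.range) : (Module.End F (Fin n → F))ˣ)
      = φ (a * b) := by
    rw [map_mul]; rfl
  have hμ' : μ ∈ spectrum F
      ((((⟨φ a, a, rfl⟩ * ⟨φ b, b, rfl⟩ : φ.range) : (Module.End F (Fin n → F))ˣ)) :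
        Module.End F (Fin n → F)) := by
    rw [hcoe, hspec (a * b)]
    exact hμ
  have h2 := h hμ'
  have e1 : spectrum F (((⟨φ a, a, rfl⟩ : φ.range) : (Module.End F (Fin n → F))ˣ) :
      Module.End F (Fin n → F)) = spectrum F ((ρ a : GL (Fin n) F) : Matrix (Fin n) (Fin n) F) :=
    hspec a
  have e2 : spectrum F (((⟨φ b, b, rfl⟩ : φ.range) : (Module.End F (Fin n → F))ˣ) :
      Module.End F (Fin n → F)) = spectrum F ((ρ b : GL (Fin n) F) : Matrix (Fin n) (Fin n) F) :=
    hspec b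
  rw [e1, e2] at h2
  exact h2
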